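/- Let α > 0, c ∈ ℝⁿ, γ > 0, μ > 0, and for x ∈ ℝⁿ let φ(x, μ, γ) be the unique minimizer over u ∈ ℝⁿ of (1/2)‖x − u‖² + γμ B(u), where B(u) = −ln(α − ‖u − c‖²) if ‖u − c‖² < α and +∞ otherwise. Define M(x, μ, γ) = Iₙ − 2 (x − φ(x, μ, γ)) (φ(x, μ, γ) − c)ᵀ / (α − 3‖φ(x, μ, γ) − c‖² + 2γμ + 2 (φ(x, μ, γ) − c)ᵀ(x − c)). Then x′ ↦ φ(x′, μ, γ) is differentiable at every x ∈ ℝⁿ and its Jacobian matrix equals ((α − ‖φ(x, μ, γ) − c‖²)/(α − ‖φ(x, μ, γ) − c‖² + 2γμ)) M(x, μ, γ). -/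

import Mathlib

open scoped InnerProductSpace

/-- Logarithmic barrier of the Euclidean ball `{u : ‖u - c‖² ≤ α}`. -/
noncomputable def ballBarrier {n : ℕ} (α : ℝ) (c u : EuclideanSpace ℝ (Fin n)) : EReal :=
  if ‖u - c‖ ^ 2 < α then ((- Real.log (α - ‖u - c‖ ^ 2) : ℝ) : EReal) else ⊤

/-- The objective `u ↦ (1/2)‖x-u‖² + γμ B(u)` defining `prox_{γμB}(x)`. -/
noncomputable def ballProxObj {n : ℕ} (α : ℝ) (c : EuclideanSpace ℝ (Fin n)) (γ μ : ℝ)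
    (x u : EuclideanSpace ℝ (Fin n)) : EReal :=
  ((1 / 2 * ‖x - u‖ ^ 2 : ℝ) : EReal) + ((γ * μ : ℝ) : EReal) * ballBarrier α c u

section helpers
variable {E : Type*} [NormedAddCommGroup E] [InnerProductSpace ℝ E]
noncomputable def bpPsi (α γ μ : ℝ) (c : E) (u : E) : E :=
  u + ((2*γ*μ) * (α - ‖u - c‖^2)⁻¹) • (u - c)

lemma normsq_hasStrict (c p : E) :
    HasStrictFDerivAt (fun u : E => ‖u - c‖^2) (2 • innerSL ℝ (p - c)) p := by
  have h1 : HasStrictFDerivAt (fun u : E => u - c) (ContinuousLinearMap.id ℝ E) p :=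
    (hasStrictFDerivAt_id p).sub_const c
  have := (hasStrictFDerivAt_norm_sq (p - c)).comp p h1
  simpa [Function.comp_def] using this

lemma bpPsi_hasStrict (α γ μ : ℝ) (c p : E) (hd : α - ‖p - c‖^2 ≠ 0) :
    HasStrictFDerivAt (bpPsi α γ μ c)
      ((1 + (2*γ*μ) * (α - ‖p - c‖^2)⁻¹) • ContinuousLinearMap.id ℝ E
        + ((4*γ*μ) * ((α - ‖p - c‖^2)^2)⁻¹) • (innerSL ℝ (p - c)).smulRight (p - c)) p := by
  have hq := normsq_hasStrict c p
  have hf : HasStrictFDerivAt (fun u : E => α - ‖u - c‖^2) (0 - 2 • innerSL ℝ (p - c)) p :=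
    (hasStrictFDerivAt_const α p).sub hq
  have hinv := (hasStrictFDerivAt_inv' (𝕜 := ℝ) hd).comp p hf
  have hg : HasStrictFDerivAt (fun u : E => (2*γ*μ) * (α - ‖u - c‖^2)⁻¹)
      ((2*γ*μ) • ((-(ContinuousLinearMap.mulLeftRight ℝ ℝ (α - ‖p - c‖^2)⁻¹ (α - ‖p - c‖^2)⁻¹)).comp
        (0 - 2 • innerSL ℝ (p - c)))) p := by
    exact hinv.const_mul _
  have hs := hg.smul ((hasStrictFDerivAt_id p).sub_const c)
  have hfin := (hasStrictFDerivAt_id p).add hs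
  convert hfin using 1
  · rfl
  ext h
  simp [ContinuousLinearMap.smulRight_apply, ContinuousLinearMap.mulLeftRight_apply]
  match_scalars <;> (try simp only [← inv_pow]) <;> ring

noncomputable def bpF (α γ μ : ℝ) (c x : E) (u : E) : ℝ :=
  1/2 * ‖x - u‖^2 - γ*μ * Real.log (α - ‖u - c‖^2)

lemma bpF_hasFDerivAt (α γ μ : ℝ) (c x p : E) (hd : α - ‖p - c‖^2 ≠ 0) :
    HasFDerivAt (bpF α γ μ c x)
      (innerSL ℝ (p - x) + ((2*γ*μ) * (α - ‖p - c‖^2)⁻¹) • innerSL ℝ (p - c)) p := by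
  have h1 : HasFDerivAt (fun u : E => x - u)
      ((0 : E →L[ℝ] E) - ContinuousLinearMap.id ℝ E) p :=
    (hasFDerivAt_const x p).sub (hasFDerivAt_id p)
  have h2 := h1.norm_sq.const_mul (1/2 : ℝ)
  have h3 : HasFDerivAt (fun u : E => α - ‖u - c‖^2)
      ((0 : E →L[ℝ] ℝ) - 2 • innerSL ℝ (p - c)) p := by
    have := ((hasFDerivAt_id p).sub_const c).norm_sq
    exact (hasFDerivAt_const α p).sub (by simpa using this)
  have h4 := (h3.log hd).const_mul (γ*μ)
  have h6 : HasFDerivAt (fun u : E => 1/2 * ‖x - u‖^2 - γ*μ * Real.log (α - ‖u - c‖^2))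
      ((1/2 : ℝ) • (2 • (innerSL ℝ (x - p)).comp ((0 : E →L[ℝ] E) - ContinuousLinearMap.id ℝ E))
        - ((γ*μ) • ((α - ‖p - c‖^2)⁻¹ • ((0 : E →L[ℝ] ℝ) - 2 • innerSL ℝ (p - c))))) p := by
    have h5 := h2.sub h4
    simp [one_div] at h5 ⊢
    exact h5
  refine HasFDerivAt.congr_fderiv h6 ?_
  ext h
  simp [ContinuousLinearMap.smulRight_apply, inner_sub_left, inner_smul_left]
  ring

lemma bp_first_order (α γ μ : ℝ) (c x p : E) (hd : α - ‖p - c‖^2 ≠ 0)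
    (hmin : IsLocalMin (bpF α γ μ c x) p) : bpPsi α γ μ c p = x := by
  have hF := bpF_hasFDerivAt α γ μ c x p hd
  have h0 := hmin.hasFDerivAt_eq_zero hF
  set w : E := (p - x) + ((2*γ*μ) * (α - ‖p - c‖^2)⁻¹) • (p - c) with hw
  have happ := DFunLike.congr_fun h0 w
  have hsplit : ⟪w, w⟫_ℝ = ⟪p - x, w⟫_ℝ + (2*γ*μ * (α - ‖p - c‖^2)⁻¹) * ⟪p - c, w⟫_ℝ := by
    rw [hw]; rw [inner_add_left, real_inner_smul_left]
  have hw0 : ⟪w, w⟫_ℝ = 0 := by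
    rw [hsplit, inner_sub_left, inner_sub_left]
    simpa using happ
  have hwz : w = 0 := inner_self_eq_zero.mp hw0
  have : p + ((2*γ*μ) * (α - ‖p - c‖^2)⁻¹) • (p - c) - x = w := by
    rw [hw]; abel
  have h2 : bpPsi α γ μ c p - x = 0 := by rw [bpPsi, this, hwz]
  exact sub_eq_zero.mp h2

lemma bp_mono_scalar (α γ μ A B t : ℝ) (hγ : 0 < γ) (hμ : 0 < μ)
    (hfa : A < α) (hfb : B < α) (hn : 0 ≤ A - 2*t + B)
    (heq : (A - t) - (t - B) + (2*γ*μ*(α-A)⁻¹*(A - t) - 2*γ*μ*(α-B)⁻¹*(t - B)) = 0) :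
    A - 2*t + B ≤ 0 := by
  have hfa' : (0:ℝ) < α - A := by linarith
  have hfb' : (0:ℝ) < α - B := by linarith
  have key : 0 ≤ (α - B) * (A - t) + (α - A) * (B - t) := by
    nlinarith [mul_nonneg (by linarith : (0:ℝ) ≤ 2*α - A - B) hn, sq_nonneg (A - B)]
  have hT : 0 ≤ (α - A)⁻¹ * (A - t) + (α - B)⁻¹ * (B - t) := by
    have h1 : (α - A)⁻¹ * (A - t) + (α - B)⁻¹ * (B - t)
        = ((α - B) * (A - t) + (α - A) * (B - t)) / ((α - A) * (α - B)) := by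
      field_simp
    rw [h1]
    exact div_nonneg key (le_of_lt (mul_pos hfa' hfb'))
  have hgm : (0:ℝ) < 2*γ*μ := by positivity
  nlinarith [mul_nonneg hgm.le hT]

lemma bp_inner_helper (a b : E) (s r : ℝ) (h : (a - b) + s • a - r • b = 0) :
    (‖a‖^2 - ⟪a, b⟫_ℝ) - (⟪a, b⟫_ℝ - ‖b‖^2)
      + (s*(‖a‖^2 - ⟪a, b⟫_ℝ) - r*(⟪a, b⟫_ℝ - ‖b‖^2)) = 0 := by
  have h2 := congrArg (fun z : E => ⟪z, a - b⟫_ℝ) h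
  simp only [inner_add_left, inner_sub_left, inner_sub_right, real_inner_smul_left,
    inner_zero_left, real_inner_self_eq_norm_sq] at h2
  simp only [real_inner_comm b a] at h2 ⊢
  linarith [h2]

lemma bp_mono (α γ μ : ℝ) (hγ : 0 < γ) (hμ : 0 < μ) (c : E) (u v : E)
    (hu : ‖u - c‖^2 < α) (hv : ‖v - c‖^2 < α) (h : bpPsi α γ μ c u = bpPsi α γ μ c v) :
    u = v := by
  have h' := h
  rw [bpPsi, bpPsi] at h'
  have hz := sub_eq_zero.mpr h'
  have hdiff : ((u - c) - (v - c)) + ((2*γ*μ) * (α - ‖u - c‖^2)⁻¹) • (u - c)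
      - ((2*γ*μ) * (α - ‖v - c‖^2)⁻¹) • (v - c) = 0 := by
    rw [← hz]; abel
  have hinner := bp_inner_helper (u - c) (v - c) _ _ hdiff
  have hab2 : ‖(u - c) - (v - c)‖^2
      = ‖u - c‖^2 - 2*⟪u - c, v - c⟫_ℝ + ‖v - c‖^2 := norm_sub_sq_real (u - c) (v - c)
  have hn : 0 ≤ ‖u - c‖^2 - 2*⟪u - c, v - c⟫_ℝ + ‖v - c‖^2 := by
    rw [← hab2]; positivity
  have hle := bp_mono_scalar α γ μ (‖u - c‖^2) (‖v - c‖^2) (⟪u - c, v - c⟫_ℝ) hγ hμ hu hv hn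
    (by linarith [hinner])
  have h0 : ‖(u - c) - (v - c)‖^2 = 0 := le_antisymm (by rw [hab2]; linarith) (by positivity)
  have : (u - c) - (v - c) = 0 := by
    have := pow_eq_zero_iff (n := 2) (by norm_num) |>.mp h0
    exact norm_eq_zero.mp this
  have huv : u - v = 0 := by rw [← this]; abel
  exact sub_eq_zero.mp huv

end helpers

set_option maxHeartbeats 2000000 in
theorem ball_prox_jacobian {n : ℕ} (α : ℝ) (hα : 0 < α) (c : EuclideanSpace ℝ (Fin n))
    (γ μ : ℝ) (hγ : 0 < γ) (hμ : 0 < μ)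
    (φ : EuclideanSpace ℝ (Fin n) → EuclideanSpace ℝ (Fin n))
    (hφ : ∀ x u : EuclideanSpace ℝ (Fin n), u ≠ φ x →
      ballProxObj α c γ μ x (φ x) < ballProxObj α c γ μ x u) :
    ∀ x : EuclideanSpace ℝ (Fin n),
      HasFDerivAt φ
        (((α - ‖φ x - c‖ ^ 2) / (α - ‖φ x - c‖ ^ 2 + 2 * γ * μ)) •
          (ContinuousLinearMap.id ℝ (EuclideanSpace ℝ (Fin n)) -
            (2 / (α - 3 * ‖φ x - c‖ ^ 2 + 2 * γ * μ + 2 * ⟪φ x - c, x - c⟫_ℝ)) •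
              (innerSL ℝ (φ x - c)).smulRight (x - φ x))) x := by
  have hgm : (0:ℝ) < γ * μ := mul_pos hγ hμ
  -- Step A: the prox point is always in the open ball
  have hmem : ∀ x : EuclideanSpace ℝ (Fin n), ‖φ x - c‖^2 < α := by
    intro x
    by_contra hcon
    have hbar : ballBarrier α c (φ x) = ⊤ := if_neg hcon
    have htop : ballProxObj α c γ μ x (φ x) = ⊤ := by
      rw [ballProxObj, hbar, EReal.coe_mul_top_of_pos hgm, EReal.coe_add_top]
    have hne : c ≠ φ x := by
      intro hq
      apply hcon
      rw [← hq]
      simpa using hα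
    have hlt := hφ x c hne
    rw [htop] at hlt
    exact not_top_lt hlt
  -- Step B: on the ball the objective is the coercion of the real objective
  have hcoe : ∀ x u : EuclideanSpace ℝ (Fin n), ‖u - c‖^2 < α →
      ballProxObj α c γ μ x u = ((bpF α γ μ c x u : ℝ) : EReal) := by
    intro x u hu
    rw [ballProxObj, ballBarrier, if_pos hu, ← EReal.coe_mul, ← EReal.coe_add]
    congr 1
    rw [bpF]
    ring
  -- Step C: local minimality of the real objective
  have hloc : ∀ x : EuclideanSpace ℝ (Fin n), IsLocalMin (bpF α γ μ c x) (φ x) := by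
    intro x
    have hopen : IsOpen {u : EuclideanSpace ℝ (Fin n) | ‖u - c‖^2 < α} := by
      have hcont : Continuous fun u : EuclideanSpace ℝ (Fin n) => ‖u - c‖^2 := by continuity
      exact isOpen_lt hcont continuous_const
    refine Filter.eventually_of_mem (hopen.mem_nhds (hmem x)) ?_
    intro u hu
    rcases eq_or_ne u (φ x) with h | h
    · rw [h]
    · have hlt := hφ x u h
      rw [hcoe x u hu, hcoe x (φ x) (hmem x)] at hlt
      exact_mod_cast hlt.le
  -- Step D: first-order condition
  have hpsi : ∀ x : EuclideanSpace ℝ (Fin n), bpPsi α γ μ c (φ x) = x := by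
    intro x
    exact bp_first_order α γ μ c x (φ x) (by have := hmem x; intro h0; nlinarith) (hloc x)
  -- Step EuclideanSpace ℝ (Fin n): main argument
  intro x
  have hs0 : (0:ℝ) ≤ ‖φ x - c‖^2 := sq_nonneg _
  have hd : (0:ℝ) < α - ‖φ x - c‖^2 := by linarith [hmem x]
  have hd0 : α - ‖φ x - c‖^2 ≠ 0 := ne_of_gt hd
  have hd2 : (0:ℝ) < α - ‖φ x - c‖^2 + 2*γ*μ := by linarith
  have hd20 : α - ‖φ x - c‖^2 + 2*γ*μ ≠ 0 := ne_of_gt hd2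
  have hD2 : (0:ℝ) < (α - ‖φ x - c‖^2)*(α - ‖φ x - c‖^2 + 2*γ*μ) + 4*γ*μ*‖φ x - c‖^2 := by
    nlinarith
  have hD20 : (α - ‖φ x - c‖^2)*(α - ‖φ x - c‖^2 + 2*γ*μ) + 4*γ*μ*‖φ x - c‖^2 ≠ 0 :=
    ne_of_gt hD2
  have hxp : x - φ x = ((2*γ*μ) * (α - ‖φ x - c‖^2)⁻¹) • (φ x - c) := by
    have h1 := congrArg (fun z : EuclideanSpace ℝ (Fin n) => z - φ x) (hpsi x).symm
    simpa [bpPsi, add_sub_cancel_left] using h1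
  have hip : ⟪φ x - c, x - c⟫_ℝ = (1 + (2*γ*μ) * (α - ‖φ x - c‖^2)⁻¹) * ‖φ x - c‖^2 := by
    have hxc : x - c = (φ x - c) + ((2*γ*μ) * (α - ‖φ x - c‖^2)⁻¹) • (φ x - c) := by
      rw [← hxp]
      abel
    rw [hxc, inner_add_right, real_inner_smul_right, real_inner_self_eq_norm_sq]
    ring
  have hk : 2 / (α - 3 * ‖φ x - c‖ ^ 2 + 2 * γ * μ + 2 * ⟪φ x - c, x - c⟫_ℝ)
      = 2*(α - ‖φ x - c‖^2) /
        ((α - ‖φ x - c‖^2)*(α - ‖φ x - c‖^2 + 2*γ*μ) + 4*γ*μ*‖φ x - c‖^2) := by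
    rw [hip]
    rw [show α - 3 * ‖φ x - c‖ ^ 2 + 2 * γ * μ
        + 2 * ((1 + (2*γ*μ) * (α - ‖φ x - c‖^2)⁻¹) * ‖φ x - c‖^2)
      = ((α - ‖φ x - c‖^2)*(α - ‖φ x - c‖^2 + 2*γ*μ) + 4*γ*μ*‖φ x - c‖^2)
          / (α - ‖φ x - c‖^2) from by field_simp; ring]
    rw [div_div_eq_mul_div]
  -- the derivative of ψ at φ x
  set A : EuclideanSpace ℝ (Fin n) →L[ℝ] EuclideanSpace ℝ (Fin n) :=
    (1 + (2*γ*μ) * (α - ‖φ x - c‖^2)⁻¹) • ContinuousLinearMap.id ℝ (EuclideanSpace ℝ (Fin n))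
      + ((4*γ*μ) * ((α - ‖φ x - c‖^2)^2)⁻¹) • (innerSL ℝ (φ x - c)).smulRight (φ x - c)
    with hA
  set L : EuclideanSpace ℝ (Fin n) →L[ℝ] EuclideanSpace ℝ (Fin n) :=
    ((α - ‖φ x - c‖ ^ 2) / (α - ‖φ x - c‖ ^ 2 + 2 * γ * μ)) •
      (ContinuousLinearMap.id ℝ (EuclideanSpace ℝ (Fin n)) -
        (2 / (α - 3 * ‖φ x - c‖ ^ 2 + 2 * γ * μ + 2 * ⟪φ x - c, x - c⟫_ℝ)) •
          (innerSL ℝ (φ x - c)).smulRight (x - φ x)) with hL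
  have hLapp : ∀ y : EuclideanSpace ℝ (Fin n), L y
      = ((α - ‖φ x - c‖ ^ 2) / (α - ‖φ x - c‖ ^ 2 + 2 * γ * μ)) •
        (y - ((2*(α - ‖φ x - c‖^2) /
          ((α - ‖φ x - c‖^2)*(α - ‖φ x - c‖^2 + 2*γ*μ) + 4*γ*μ*‖φ x - c‖^2))
            * (⟪φ x - c, y⟫_ℝ * ((2*γ*μ) * (α - ‖φ x - c‖^2)⁻¹))) • (φ x - c)) := by
    intro y
    rw [hL]
    simp only [ContinuousLinearMap.coe_smul', Pi.smul_apply, ContinuousLinearMap.coe_sub',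
      Pi.sub_apply, ContinuousLinearMap.id_apply, ContinuousLinearMap.smulRight_apply,
      innerSL_apply_apply]
    rw [hk, hxp]
    rw [smul_smul, smul_smul]
    ring_nf
  have hAapp : ∀ y : EuclideanSpace ℝ (Fin n), A y
      = (1 + (2*γ*μ) * (α - ‖φ x - c‖^2)⁻¹) • y
        + ((4*γ*μ) * ((α - ‖φ x - c‖^2)^2)⁻¹ * ⟪φ x - c, y⟫_ℝ) • (φ x - c) := by
    intro y
    rw [hA]
    simp only [ContinuousLinearMap.add_apply, ContinuousLinearMap.coe_smul', Pi.smul_apply,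
      ContinuousLinearMap.id_apply, ContinuousLinearMap.smulRight_apply, innerSL_apply_apply]
    rw [smul_smul]
  have hAL : ∀ y : EuclideanSpace ℝ (Fin n), A (L y) = y := by
    intro y
    rw [hLapp y, hAapp]
    obtain ⟨q, hq⟩ : ∃ q : EuclideanSpace ℝ (Fin n), φ x - c = q := ⟨_, rfl⟩
    have hd0' := hd0; have hd20' := hd20; have hD20' := hD20
    rw [hq] at hd0' hd20' hD20'
    rw [hq]
    simp only [inner_sub_right, real_inner_smul_right, real_inner_self_eq_norm_sq]
    have hE1 : (α - ‖q‖ ^ 2) * (α - ‖q‖ ^ 2 + 2 * γ * μ) + γ * μ * ‖q‖ ^ 2 * 4 ≠ 0 := by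
      convert hD20' using 1; ring
    have hE2 : (α - ‖q‖ ^ 2) * (α - ‖q‖ ^ 2 + 2 * γ * μ) + ‖q‖ ^ 2 * γ * μ * 4 ≠ 0 := by
      convert hD20' using 1; ring
    match_scalars <;> field_simp [hd0', hd20', hD20', hE1, hE2] <;> ring
  have hLA : ∀ y : EuclideanSpace ℝ (Fin n), L (A y) = y := by
    intro y
    rw [hAapp y, hLapp]
    obtain ⟨q, hq⟩ : ∃ q : EuclideanSpace ℝ (Fin n), φ x - c = q := ⟨_, rfl⟩
    have hd0' := hd0; have hd20' := hd20; have hD20' := hD20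
    rw [hq] at hd0' hd20' hD20'
    rw [hq]
    simp only [inner_add_right, real_inner_smul_right, real_inner_self_eq_norm_sq]
    have hE1 : (α - ‖q‖ ^ 2) * (α - ‖q‖ ^ 2 + 2 * γ * μ) + γ * μ * ‖q‖ ^ 2 * 4 ≠ 0 := by
      convert hD20' using 1; ring
    have hE2 : (α - ‖q‖ ^ 2) * (α - ‖q‖ ^ 2 + 2 * γ * μ) + ‖q‖ ^ 2 * γ * μ * 4 ≠ 0 := by
      convert hD20' using 1; ring
    match_scalars <;> field_simp [hd0', hd20', hD20', hE1, hE2] <;> ring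
  -- the continuous linear equivalence
  let e : EuclideanSpace ℝ (Fin n) ≃L[ℝ] EuclideanSpace ℝ (Fin n) := ContinuousLinearEquiv.equivOfInverse A L hLA hAL
  have heA : (e : EuclideanSpace ℝ (Fin n) →L[ℝ] EuclideanSpace ℝ (Fin n)) = A := rfl
  have heL : (e.symm : EuclideanSpace ℝ (Fin n) →L[ℝ] EuclideanSpace ℝ (Fin n)) = L := rfl
  have hstrict : HasStrictFDerivAt (bpPsi α γ μ c) (e : EuclideanSpace ℝ (Fin n) →L[ℝ] EuclideanSpace ℝ (Fin n)) (φ x) := by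
    rw [heA, hA]
    exact bpPsi_hasStrict α γ μ c (φ x) hd0
  have hg : ∀ᶠ u in nhds (φ x), φ (bpPsi α γ μ c u) = u := by
    have hopen : IsOpen {u : EuclideanSpace ℝ (Fin n) | ‖u - c‖^2 < α} := by
      have hcont : Continuous fun u : EuclideanSpace ℝ (Fin n) => ‖u - c‖^2 := by continuity
      exact isOpen_lt hcont continuous_const
    refine Filter.eventually_of_mem (hopen.mem_nhds (hmem x)) ?_
    intro u hu
    exact bp_mono α γ μ hγ hμ c _ _ (hmem (bpPsi α γ μ c u)) hu (hpsi (bpPsi α γ μ c u))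
  have hres := hstrict.to_local_left_inverse hg
  rw [hpsi x] at hres
  have := hres.hasFDerivAt
  rw [heL, hL] at this
  exact this
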